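/- Suppose α = 0. Then for every integer k ≥ m̂, the asymptotic expected complementary cumulative in-degree distribution satisfies F̄_∞(k) = 1 − Σ_{j=m̂}^{k−1} P_∞(j) = ( m/(1 + m) )^{k − m̂}. -/

import Mathlib

theorem ccdf_alpha_zero
    (m mh : ℕ) (hm : 1 ≤ m)
    (α : ℝ) (hα : α ∈ Set.Icc (0 : ℝ) 1)
    (P : ℕ → ℝ)
    (hbase : P mh = ((m : ℝ) + (mh : ℝ)) /
      ((m : ℝ) ^ 2 + (m : ℝ) * (mh : ℝ) + (m : ℝ) + (mh : ℝ) - α * (m : ℝ) ^ 2))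
    (hrec : ∀ k : ℕ, mh < k →
      P k = ((α * ((k : ℝ) * (m : ℝ) - (m : ℝ) ^ 2 - (m : ℝ) * (mh : ℝ) - (m : ℝ))
                + (m : ℝ) ^ 2 + (m : ℝ) * (mh : ℝ)) /
             (α * ((k : ℝ) * (m : ℝ) - (m : ℝ) ^ 2 - (m : ℝ) * (mh : ℝ))
                + (m : ℝ) ^ 2 + (m : ℝ) * (mh : ℝ) + (m : ℝ) + (mh : ℝ))) * P (k - 1))
    (hα0 : α = 0) :
    ∀ k : ℕ, mh ≤ k →
      1 - ∑ j ∈ Finset.Ico mh k, P j = ((m : ℝ) / (1 + (m : ℝ))) ^ (k - mh) := by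
  subst hα0
  have hm1 : (1 : ℝ) ≤ (m : ℝ) := by exact_mod_cast hm
  have hmpos : (0 : ℝ) < (m : ℝ) := by linarith
  have hmh : (0 : ℝ) ≤ (mh : ℝ) := Nat.cast_nonneg mh
  have hne : ((m : ℝ) + (mh : ℝ)) ≠ 0 := by positivity
  have h1m : (1 : ℝ) + (m : ℝ) ≠ 0 := by positivity
  -- closed form for P
  have hP : ∀ k : ℕ, mh ≤ k →
      P k = (1 / (1 + (m : ℝ))) * ((m : ℝ) / (1 + (m : ℝ))) ^ (k - mh) := by
    intro k hk
    induction k, hk using Nat.le_induction with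
    | base =>
      simp only [Nat.sub_self, pow_zero, mul_one]
      rw [hbase]
      rw [zero_mul, sub_zero, div_eq_div_iff (by positivity) h1m]
      ring
    | succ k hk ih =>
      have hlt : mh < k + 1 := Nat.lt_succ_of_le hk
      have := hrec (k + 1) hlt
      simp only [Nat.add_sub_cancel, zero_mul, zero_add] at this
      rw [this, ih]
      have hkm : k + 1 - mh = (k - mh) + 1 := by omega
      rw [hkm, pow_succ ((m : ℝ) / (1 + (m : ℝ))) (k - mh)]
      have hratio : ((m : ℝ) ^ 2 + (m : ℝ) * (mh : ℝ)) /
             ((m : ℝ) ^ 2 + (m : ℝ) * (mh : ℝ) + (m : ℝ) + (mh : ℝ)) = (m : ℝ) / (1 + (m : ℝ)) := by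
        rw [div_eq_div_iff (by positivity) (by positivity)]
        ring
      rw [hratio]
      ring
  intro k hk
  induction k, hk using Nat.le_induction with
  | base => simp
  | succ k hk ih =>
    rw [Finset.sum_Ico_succ_top hk, hP k hk]
    have hkm : k + 1 - mh = (k - mh) + 1 := by omega
    rw [hkm, pow_succ]
    have : (1 : ℝ) - ∑ j ∈ Finset.Ico mh k, P j = ((m : ℝ) / (1 + (m : ℝ))) ^ (k - mh) := ih
    have hdiv : (1 : ℝ) - 1 / (1 + (m : ℝ)) = (m : ℝ) / (1 + (m : ℝ)) := by
      field_simp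
      ring
    linear_combination this + ((m : ℝ) / (1 + (m : ℝ))) ^ (k - mh) * hdiv
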